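/- Let n ≥ 5. In the polynomial ring ℤ[t,z], every common divisor of the three polynomials (1 − t z²)^{n−3}·(1 + t z³)^{n−2}·(1 − z + z²)^{(n−3)(n−2)}, (1 − t z²)^{n−3}·(1 − z)^{(n−3)(n−2)}, and (1 + t z³)·(1 − z + z²)^{n−2}·(1 − z)^{(n−4)(n−1)+1} is a unit (i.e. ±1); equivalently, the greatest common divisor of these three polynomials is 1. -/

import Mathlib

open MvPolynomial

/-- The polynomial ring ℤ[t,z] in two commuting variables. -/
noncomputable abbrev Rtz : Type := MvPolynomial (Fin 2) ℤ

/-- The variable `t` of ℤ[t,z]. -/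
noncomputable def tv : Rtz := MvPolynomial.X 0

/-- The variable `z` of ℤ[t,z]. -/
noncomputable def zv : Rtz := MvPolynomial.X 1

lemma deg0_of_dvd {d P : Rtz} (hP : P ≠ 0) (hd : d ∣ P)
    (h0 : MvPolynomial.degreeOf 0 P = 0) : MvPolynomial.degreeOf 0 d = 0 := by
  obtain ⟨e, rfl⟩ := hd
  have hd0 : d ≠ 0 := left_ne_zero_of_mul hP
  have he0 : e ≠ 0 := right_ne_zero_of_mul hP
  have hmap : (MvPolynomial.finSuccEquiv ℤ 1 (d * e)).natDegree
      = (MvPolynomial.finSuccEquiv ℤ 1 d).natDegree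
        + (MvPolynomial.finSuccEquiv ℤ 1 e).natDegree := by
    rw [map_mul]
    refine Polynomial.natDegree_mul ?_ ?_
    · exact fun h => hd0 ((MvPolynomial.finSuccEquiv ℤ 1).injective (by simpa using h))
    · exact fun h => he0 ((MvPolynomial.finSuccEquiv ℤ 1).injective (by simpa using h))
  rw [MvPolynomial.natDegree_finSuccEquiv, MvPolynomial.natDegree_finSuccEquiv,
    MvPolynomial.natDegree_finSuccEquiv, h0] at hmap
  omega

lemma deg1_of_dvd {d P : Rtz} (hP : P ≠ 0) (hd : d ∣ P)
    (h0 : MvPolynomial.degreeOf 1 P = 0) : MvPolynomial.degreeOf 1 d = 0 := by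
  have hinj : Function.Injective (Equiv.swap (0 : Fin 2) 1) := (Equiv.swap _ _).injective
  have e1 : (Equiv.swap (0 : Fin 2) 1) 1 = 0 := Equiv.swap_apply_right 0 1
  have hP' : MvPolynomial.rename (Equiv.swap (0 : Fin 2) 1) P ≠ 0 := by
    intro h
    exact hP (MvPolynomial.rename_injective _ hinj (by simpa using h))
  have hd' : MvPolynomial.rename (Equiv.swap (0 : Fin 2) 1) d
      ∣ MvPolynomial.rename (Equiv.swap (0 : Fin 2) 1) P :=
    map_dvd (MvPolynomial.rename (Equiv.swap (0 : Fin 2) 1)) hd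
  have hrP := MvPolynomial.degreeOf_rename_of_injective hinj (p := P) 1
  have hrd := MvPolynomial.degreeOf_rename_of_injective hinj (p := d) 1
  rw [e1] at hrP hrd
  have h0' : MvPolynomial.degreeOf 0 (MvPolynomial.rename (Equiv.swap (0 : Fin 2) 1) P) = 0 := by
    rw [hrP]; exact h0
  have key := deg0_of_dvd hP' hd' h0'
  rw [hrd] at key
  exact key

lemma eq_C_of_deg {d : Rtz} (h0 : MvPolynomial.degreeOf 0 d = 0)
    (h1 : MvPolynomial.degreeOf 1 d = 0) :
    d = MvPolynomial.C (MvPolynomial.constantCoeff d) := by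
  have hsupp : ∀ m ∈ d.support, m = (0 : Fin 2 →₀ ℕ) := by
    intro m hm
    have t0 := MvPolynomial.monomial_le_degreeOf 0 hm
    have t1 := MvPolynomial.monomial_le_degreeOf 1 hm
    rw [h0] at t0; rw [h1] at t1
    ext i
    fin_cases i
    · simpa using t0
    · simpa using t1
  ext m
  rw [MvPolynomial.coeff_C]
  by_cases hm : (0 : Fin 2 →₀ ℕ) = m
  · rw [if_pos hm, ← hm]
    rfl
  · rw [if_neg hm]
    by_contra hc
    exact hm ((hsupp m (MvPolynomial.mem_support_iff.mpr hc)).symm)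

lemma degreeOf_quad (i j : Fin 2) (hij : i ≠ j) (c0 c1 c2 : ℤ) :
    MvPolynomial.degreeOf i
      (MvPolynomial.C c0 + MvPolynomial.C c1 * MvPolynomial.X j
        + MvPolynomial.C c2 * MvPolynomial.X j ^ 2 : Rtz) = 0 := by
  have h1 : (MvPolynomial.C c1 * MvPolynomial.X j : Rtz)
      = MvPolynomial.monomial (Finsupp.single j 1) c1 := by
    rw [← MvPolynomial.C_mul_X_pow_eq_monomial, pow_one]
  have h2 : (MvPolynomial.C c2 * MvPolynomial.X j ^ 2 : Rtz)
      = MvPolynomial.monomial (Finsupp.single j 2) c2 :=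
    MvPolynomial.C_mul_X_pow_eq_monomial
  have h0' : (MvPolynomial.C c0 : Rtz) = MvPolynomial.monomial 0 c0 :=
    by rw [MvPolynomial.monomial_zero']
  rw [MvPolynomial.degreeOf_eq_sup]
  refine Nat.le_zero.mp (Finset.sup_le ?_)
  intro m hm
  rw [MvPolynomial.mem_support_iff] at hm
  by_contra hgt
  apply hm
  have hmi : m i ≠ 0 := fun h => hgt (by omega)
  have hne : ∀ k : ℕ, Finsupp.single j k ≠ m := by
    intro k hk
    apply hmi
    rw [← hk, Finsupp.single_apply, if_neg hij.symm]
  have hne0 : (0 : Fin 2 →₀ ℕ) ≠ m := fun h => hmi (by rw [← h]; rfl)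
  rw [h0', h1, h2, MvPolynomial.coeff_add, MvPolynomial.coeff_add,
    MvPolynomial.coeff_monomial, MvPolynomial.coeff_monomial, MvPolynomial.coeff_monomial,
    if_neg hne0, if_neg (hne 1), if_neg (hne 2)]
  ring

lemma isUnit_of_dvd_two {q P Q : Rtz} (hP : q ∣ P) (hQ : q ∣ Q)
    (hPd : MvPolynomial.degreeOf 0 P = 0) (hQd : MvPolynomial.degreeOf 1 Q = 0)
    (hPc : MvPolynomial.constantCoeff P = 1) (hQc : MvPolynomial.constantCoeff Q = 1) :
    IsUnit q := by
  have hP0 : P ≠ 0 := fun h => by simp [h] at hPc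
  have hQ0 : Q ≠ 0 := fun h => by simp [h] at hQc
  have d0 : MvPolynomial.degreeOf 0 q = 0 := deg0_of_dvd hP0 hP hPd
  have d1 : MvPolynomial.degreeOf 1 q = 0 := deg1_of_dvd hQ0 hQ hQd
  have hqC := eq_C_of_deg d0 d1
  obtain ⟨e, he⟩ := hP
  have hmul : MvPolynomial.constantCoeff q * MvPolynomial.constantCoeff e = 1 := by
    have h' := congrArg MvPolynomial.constantCoeff he
    rw [map_mul, hPc] at h'
    exact h'.symm
  have : IsUnit (MvPolynomial.constantCoeff q) := ⟨⟨_, _, hmul, by rw [mul_comm]; exact hmul⟩, rfl⟩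
  rw [hqC]
  exact this.map MvPolynomial.C

lemma deg0_one_add_zv : MvPolynomial.degreeOf 0 ((1 : Rtz) + zv) = 0 := by
  have : ((1 : Rtz) + zv)
      = MvPolynomial.C 1 + MvPolynomial.C 1 * MvPolynomial.X 1
        + MvPolynomial.C 0 * MvPolynomial.X 1 ^ 2 := by
    simp [zv]
  rw [this]; exact degreeOf_quad 0 1 (by decide) 1 1 0

lemma deg0_h : MvPolynomial.degreeOf 0 ((1 : Rtz) - zv + zv ^ 2) = 0 := by
  have : ((1 : Rtz) - zv + zv ^ 2)
      = MvPolynomial.C 1 + MvPolynomial.C (-1) * MvPolynomial.X 1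
        + MvPolynomial.C 1 * MvPolynomial.X 1 ^ 2 := by
    simp [zv]; ring
  rw [this]; exact degreeOf_quad 0 1 (by decide) 1 (-1) 1

lemma deg0_k : MvPolynomial.degreeOf 0 ((1 : Rtz) - zv) = 0 := by
  have : ((1 : Rtz) - zv)
      = MvPolynomial.C 1 + MvPolynomial.C (-1) * MvPolynomial.X 1
        + MvPolynomial.C 0 * MvPolynomial.X 1 ^ 2 := by
    simp [zv]; ring
  rw [this]; exact degreeOf_quad 0 1 (by decide) 1 (-1) 0

lemma deg1_one_sub_tv : MvPolynomial.degreeOf 1 ((1 : Rtz) - tv) = 0 := by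
  have : ((1 : Rtz) - tv)
      = MvPolynomial.C 1 + MvPolynomial.C (-1) * MvPolynomial.X 0
        + MvPolynomial.C 0 * MvPolynomial.X 0 ^ 2 := by
    simp [tv]; ring
  rw [this]; exact degreeOf_quad 1 0 (by decide) 1 (-1) 0

lemma deg1_one_add_tv : MvPolynomial.degreeOf 1 ((1 : Rtz) + tv) = 0 := by
  have : ((1 : Rtz) + tv)
      = MvPolynomial.C 1 + MvPolynomial.C 1 * MvPolynomial.X 0
        + MvPolynomial.C 0 * MvPolynomial.X 0 ^ 2 := by
    simp [tv]
  rw [this]; exact degreeOf_quad 1 0 (by decide) 1 1 0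

lemma deg1_tquad : MvPolynomial.degreeOf 1 ((1 : Rtz) + tv + tv ^ 2) = 0 := by
  have : ((1 : Rtz) + tv + tv ^ 2)
      = MvPolynomial.C 1 + MvPolynomial.C 1 * MvPolynomial.X 0
        + MvPolynomial.C 1 * MvPolynomial.X 0 ^ 2 := by
    simp [tv]
  rw [this]; exact degreeOf_quad 1 0 (by decide) 1 1 1

/-- For `n ≥ 5`, every common divisor in ℤ[t,z] of the three polynomials
`(1-tz²)^{n-3}·(1+tz³)^{n-2}·(1-z+z²)^{(n-3)(n-2)}`, `(1-tz²)^{n-3}·(1-z)^{(n-3)(n-2)}` and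
`(1+tz³)·(1-z+z²)^{n-2}·(1-z)^{(n-4)(n-1)+1}` is a unit, i.e. equals `±1`; equivalently,
the greatest common divisor of these three polynomials is `1`. -/
theorem gcd_three_quotients_is_one (n : ℕ) (hn : 5 ≤ n) :
    ∀ p : Rtz,
      p ∣ (1 - tv * zv ^ 2) ^ (n - 3) * (1 + tv * zv ^ 3) ^ (n - 2)
            * (1 - zv + zv ^ 2) ^ ((n - 3) * (n - 2)) →
      p ∣ (1 - tv * zv ^ 2) ^ (n - 3) * (1 - zv) ^ ((n - 3) * (n - 2)) →
      p ∣ (1 + tv * zv ^ 3) * (1 - zv + zv ^ 2) ^ (n - 2)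
            * (1 - zv) ^ ((n - 4) * (n - 1) + 1) →
      p = 1 ∨ p = -1 := by
  intro p hA hB hC
  have ccf : MvPolynomial.constantCoeff ((1 : Rtz) - tv * zv ^ 2) = 1 := by
    simp [tv, zv]
  have cck : MvPolynomial.constantCoeff ((1 : Rtz) - zv) = 1 := by simp [zv]
  have cch : MvPolynomial.constantCoeff ((1 : Rtz) - zv + zv ^ 2) = 1 := by simp [zv]
  have hpu : IsUnit p := by
    by_contra hnu
    have hp0 : p ≠ 0 := by
      rintro rfl
      have hB0 := zero_dvd_iff.mp hB
      have hcc : MvPolynomial.constantCoeff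
          (((1 : Rtz) - tv * zv ^ 2) ^ (n - 3) * (1 - zv) ^ ((n - 3) * (n - 2))) = 1 := by
        rw [map_mul, map_pow, map_pow, ccf, cck, one_pow, one_pow, one_mul]
      rw [hB0] at hcc
      simp at hcc
    obtain ⟨q, hqi, hqp⟩ := WfDvdMonoid.exists_irreducible_factor hnu hp0
    have hq : Prime q := hqi.prime
    have hqA := hqp.trans hA
    have hqB := hqp.trans hB
    have hqC := hqp.trans hC
    -- split A
    have hAsplit : q ∣ (1 - tv * zv ^ 2) ∨ q ∣ (1 + tv * zv ^ 3) ∨ q ∣ (1 - zv + zv ^ 2) := by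
      rcases hq.dvd_mul.mp hqA with h' | h'
      · rcases hq.dvd_mul.mp h' with h'' | h''
        · exact Or.inl (hq.dvd_of_dvd_pow h'')
        · exact Or.inr (Or.inl (hq.dvd_of_dvd_pow h''))
      · exact Or.inr (Or.inr (hq.dvd_of_dvd_pow h'))
    have hBsplit : q ∣ (1 - tv * zv ^ 2) ∨ q ∣ (1 - zv) := by
      rcases hq.dvd_mul.mp hqB with h' | h'
      · exact Or.inl (hq.dvd_of_dvd_pow h')
      · exact Or.inr (hq.dvd_of_dvd_pow h')
    have hCsplit : q ∣ (1 + tv * zv ^ 3) ∨ q ∣ (1 - zv + zv ^ 2) ∨ q ∣ (1 - zv) := by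
      rcases hq.dvd_mul.mp hqC with h' | h'
      · rcases hq.dvd_mul.mp h' with h'' | h''
        · exact Or.inl h''
        · exact Or.inr (Or.inl (hq.dvd_of_dvd_pow h''))
      · exact Or.inr (Or.inr (hq.dvd_of_dvd_pow h'))
    -- pairwise cases
    apply hq.not_unit
    -- helper facts
    have pair_fg : q ∣ (1 - tv * zv ^ 2) → q ∣ (1 + tv * zv ^ 3) → IsUnit q := by
      intro hf hg
      have h1 : q ∣ (1 : Rtz) + zv := by
        have e : (1 : Rtz) + zv = zv * (1 - tv * zv ^ 2) + (1 + tv * zv ^ 3) := by ring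
        rw [e]; exact dvd_add (hf.mul_left zv) hg
      have h2 : q ∣ (1 : Rtz) - tv := by
        have e : (1 : Rtz) - tv
            = (1 - tv * zv ^ 2) - tv * (1 - zv) * ((1 : Rtz) + zv) := by ring
        rw [e]; exact dvd_sub hf (h1.mul_left _)
      exact isUnit_of_dvd_two h1 h2 deg0_one_add_zv deg1_one_sub_tv (by simp [zv]) (by simp [tv])
    have pair_fh : q ∣ (1 - tv * zv ^ 2) → q ∣ (1 - zv + zv ^ 2) → IsUnit q := by
      intro hf hh
      have hu : q ∣ (1 : Rtz) + tv - tv * zv := by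
        have e : (1 : Rtz) + tv - tv * zv
            = (1 - tv * zv ^ 2) + tv * (1 - zv + zv ^ 2) := by ring
        rw [e]; exact dvd_add hf (hh.mul_left tv)
      have ht : q ∣ (1 : Rtz) + tv + tv ^ 2 := by
        have e : (1 : Rtz) + tv + tv ^ 2
            = tv ^ 2 * (1 - zv + zv ^ 2) + (1 + tv * zv) * ((1 : Rtz) + tv - tv * zv) := by
          ring
        rw [e]; exact dvd_add (hh.mul_left _) (hu.mul_left _)
      exact isUnit_of_dvd_two hh ht deg0_h deg1_tquad cch (by simp [tv])
    have pair_fk : q ∣ (1 - tv * zv ^ 2) → q ∣ (1 - zv) → IsUnit q := by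
      intro hf hk
      have h2 : q ∣ (1 : Rtz) - tv := by
        have e : (1 : Rtz) - tv
            = (1 - tv * zv ^ 2) - tv * (1 + zv) * ((1 : Rtz) - zv) := by ring
        rw [e]; exact dvd_sub hf (hk.mul_left _)
      exact isUnit_of_dvd_two hk h2 deg0_k deg1_one_sub_tv cck (by simp [tv])
    have pair_gk : q ∣ (1 + tv * zv ^ 3) → q ∣ (1 - zv) → IsUnit q := by
      intro hg hk
      have h2 : q ∣ (1 : Rtz) + tv := by
        have e : (1 : Rtz) + tv
            = (1 + tv * zv ^ 3) + tv * (1 + zv + zv ^ 2) * ((1 : Rtz) - zv) := by ring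
        rw [e]; exact dvd_add hg (hk.mul_left _)
      exact isUnit_of_dvd_two hk h2 deg0_k deg1_one_add_tv cck (by simp [tv])
    have pair_hk : q ∣ (1 - zv + zv ^ 2) → q ∣ (1 - zv) → IsUnit q := by
      intro hh hk
      have h1 : q ∣ (1 : Rtz) := by
        have e : (1 : Rtz) = (1 - zv + zv ^ 2) + zv * ((1 : Rtz) - zv) := by ring
        rw [e]; exact dvd_add hh (hk.mul_left zv)
      exact isUnit_of_dvd_one h1
    rcases hAsplit with hf | hg | hh
    · rcases hCsplit with hg | hh | hk
      · exact pair_fg hf hg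
      · exact pair_fh hf hh
      · exact pair_fk hf hk
    · rcases hBsplit with hf | hk
      · exact pair_fg hf hg
      · exact pair_gk hg hk
    · rcases hBsplit with hf | hk
      · exact pair_fh hf hh
      · exact pair_hk hh hk
  -- p is a unit, conclude p = ±1
  have h1 : p ∣ (1 : Rtz) := isUnit_iff_dvd_one.mp hpu
  have hdeg1 : ∀ i : Fin 2, MvPolynomial.degreeOf i (1 : Rtz) = 0 := by
    intro i
    rw [← MvPolynomial.C_1]
    exact MvPolynomial.degreeOf_C _ _
  have d0 : MvPolynomial.degreeOf 0 p = 0 :=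
    deg0_of_dvd one_ne_zero h1 (hdeg1 0)
  have d1 : MvPolynomial.degreeOf 1 p = 0 :=
    deg1_of_dvd one_ne_zero h1 (hdeg1 1)
  have hpC := eq_C_of_deg d0 d1
  have hc : IsUnit (MvPolynomial.constantCoeff p) := hpu.map MvPolynomial.constantCoeff
  rcases Int.isUnit_iff.mp hc with hc1 | hc1
  · left; rw [hpC, hc1, MvPolynomial.C_1]
  · right; rw [hpC, hc1]; simp
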